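/- Let E be a Banach lattice and let dx denote Lebesgue measure on ℝ^d. Suppose that for some q ∈ [1,∞) there is a constant C such that for each finite collection D of dyadic cubes and each locally integrable f: ℝ^d → E there exists a sparse subcollection S ⊆ D with ‖M̃^{dx}_D f(x)‖_E ≤ C · A^{dx}_{q,S}(‖f‖_E)(x) for almost every x. Then E has the Hardy–Littlewood property; that is, for every p ∈ (1,∞), sup_D ‖M̃^{dx}_D‖_{L^p(dx;E) → L^p(dx;E)} < ∞, where the supremum is over all finite collections D of dyadic cubes. -/

import Mathlib

open MeasureTheory ENNReal Set

attribute [local instance] Classical.propDecidable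

/-- A dyadic cube in `ℝ^d`, given by a generation `k : ℤ` and a position `m : Fin d → ℤ`;
its underlying set is `∏_i [2^k m i, 2^k (m i + 1))`. -/
structure DyadicCube (d : ℕ) where
  k : ℤ
  m : Fin d → ℤ
deriving DecidableEq

/-- The underlying set of a dyadic cube. -/
def DyadicCube.set {d : ℕ} (Q : DyadicCube d) : Set (Fin d → ℝ) :=
  {x | ∀ i, (2 : ℝ) ^ Q.k * Q.m i ≤ x i ∧ x i < (2 : ℝ) ^ Q.k * (Q.m i + 1)}

/-- A (non-dyadic) axis-parallel cube in `ℝ^d`, given by its corner and side length. -/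
structure Cube (d : ℕ) where
  c : Fin d → ℝ
  len : ℝ
  len_pos : 0 < len

/-- The underlying set of an axis-parallel cube. -/
def Cube.set {d : ℕ} (Q : Cube d) : Set (Fin d → ℝ) :=
  {x | ∀ i, Q.c i ≤ x i ∧ x i < Q.c i + Q.len}

/-- The average `⟨f⟩^μ_A = (1/μ(A)) ∫_A f dμ` of a vector-valued function. -/
noncomputable def avg {d : ℕ} {E : Type*} [NormedAddCommGroup E] [NormedSpace ℝ E]
    (μ : Measure (Fin d → ℝ)) (A : Set (Fin d → ℝ)) (f : (Fin d → ℝ) → E) : E :=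
  (μ A).toReal⁻¹ • ∫ x in A, f x ∂μ

/-- The dyadic lattice Hardy–Littlewood maximal operator
`M̃^μ_D f (x) = sup_{Q ∈ D} ⟨|f|⟩^μ_Q 1_Q(x)` (a lattice supremum of finitely many
positive elements, realized as a fold of `⊔` with base point `0`). -/
noncomputable def dyadicMaximal {d : ℕ} {E : Type*} [NormedAddCommGroup E] [Lattice E] [HasSolidNorm E] [IsOrderedAddMonoid E]
    [NormedSpace ℝ E] (μ : Measure (Fin d → ℝ)) (D : Finset (DyadicCube d))
    (f : (Fin d → ℝ) → E) (x : Fin d → ℝ) : E :=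
  D.fold (· ⊔ ·) 0 fun Q => Set.indicator Q.set (fun _ => avg μ Q.set fun y => |f y|) x

/-- A collection of dyadic cubes is sparse (w.r.t. `μ`): each `Q` in the collection carries a
measurable subset `E_Q ⊆ Q` with `μ(Q) ≤ 2 μ(E_Q)`, the subsets being pairwise disjoint. -/
def IsSparse {d : ℕ} (μ : Measure (Fin d → ℝ)) (S : Finset (DyadicCube d)) : Prop :=
  ∃ ES : DyadicCube d → Set (Fin d → ℝ),
    (∀ Q ∈ S, ES Q ⊆ Q.set ∧ MeasurableSet (ES Q) ∧ μ Q.set ≤ 2 * μ (ES Q)) ∧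
    (S : Set (DyadicCube d)).Pairwise fun Q Q' => Disjoint (ES Q) (ES Q')

/-- The sparse operator `A^μ_{q,S} f (x) = (∑_{Q ∈ S} ⟨|f|⟩_Q^q 1_Q(x))^{1/q}` acting on
scalar-valued functions. -/
noncomputable def sparseOp {d : ℕ} (μ : Measure (Fin d → ℝ)) (q : ℝ)
    (S : Finset (DyadicCube d)) (f : (Fin d → ℝ) → ℝ) (x : Fin d → ℝ) : ℝ :=
  (∑ Q ∈ S, Set.indicator Q.set (fun _ => avg μ Q.set (fun y => |f y|) ^ q) x) ^ (1 / q)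

/-- `q`-convexity of a Banach lattice with constant `C`:
`‖(∑ |e k|^q)^{1/q}‖ ≤ C (∑ ‖e k‖^q)^{1/q}`. The Krivine element `(∑ |e k|^q)^{1/q}` is
characterized as the least upper bound of all combinations `∑ a k • |e k|` where the
nonnegative coefficients `a` lie in the unit ball of the norm dual to the `ℓ^q`-norm. -/
def IsQConvexWith (E : Type*) [NormedAddCommGroup E] [Lattice E] [HasSolidNorm E] [IsOrderedAddMonoid E] [NormedSpace ℝ E]
    (q C : ℝ) : Prop :=
  ∀ (n : ℕ) (e : Fin n → E) (s : E),
    IsLUB {x : E | ∃ a : Fin n → ℝ, (∀ k, 0 ≤ a k) ∧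
        (∀ t : Fin n → ℝ, (∀ k, 0 ≤ t k) → ∑ k, a k * t k ≤ (∑ k, t k ^ q) ^ (1 / q)) ∧
        x = ∑ k, a k • |e k|} s →
    ‖s‖ ≤ C * (∑ k, ‖e k‖ ^ q) ^ (1 / q)

/-- The Hardy–Littlewood property of a Banach lattice `E`: for some `p ∈ (1,∞)` the dyadic
lattice maximal operators (w.r.t. Lebesgue measure) are bounded on `L^p(dx; E)` uniformly in
the finite collection of dyadic cubes. -/
def HasHLProperty (d : ℕ) (E : Type*) [NormedAddCommGroup E] [Lattice E] [HasSolidNorm E] [IsOrderedAddMonoid E] [NormedSpace ℝ E] : Prop :=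
  ∃ p : ℝ, 1 < p ∧ ∃ C : ℝ, ∀ (D : Finset (DyadicCube d)) (f : (Fin d → ℝ) → E),
    MemLp f (ENNReal.ofReal p) volume →
    eLpNorm (dyadicMaximal volume D f) (ENNReal.ofReal p) volume ≤
      ENNReal.ofReal C * eLpNorm f (ENNReal.ofReal p) volume

/-- Order continuity of a Banach lattice: every downward directed set with infimum `0`
contains elements of arbitrarily small norm cofinally (i.e. the corresponding decreasing net
converges to `0` in norm). -/
def IsOrderContinuous (E : Type*) [NormedAddCommGroup E] [Lattice E] [HasSolidNorm E] [IsOrderedAddMonoid E] : Prop :=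
  ∀ A : Set E, A.Nonempty → DirectedOn (· ≥ ·) A → IsGLB A 0 →
    ∀ ε : ℝ, 0 < ε → ∃ a ∈ A, ∀ b ∈ A, b ≤ a → ‖b‖ < ε

namespace DyadicCube
variable {d : ℕ}

lemma set_eq_pi (Q : DyadicCube d) :
    Q.set = Set.pi Set.univ (fun i => Ico ((2:ℝ) ^ Q.k * Q.m i) ((2:ℝ) ^ Q.k * (Q.m i + 1))) := by
  ext x; simp [DyadicCube.set, Set.mem_pi, Ico]

lemma measurableSet_set (Q : DyadicCube d) : MeasurableSet Q.set := by
  rw [set_eq_pi]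
  exact MeasurableSet.univ_pi fun i => measurableSet_Ico

lemma volume_set (Q : DyadicCube d) :
    volume Q.set = ENNReal.ofReal ((2:ℝ) ^ Q.k) ^ d := by
  rw [set_eq_pi, volume_pi_pi]
  have : ∀ i : Fin d, volume (Ico ((2:ℝ) ^ Q.k * Q.m i) ((2:ℝ) ^ Q.k * (Q.m i + 1)))
      = ENNReal.ofReal ((2:ℝ) ^ Q.k) := by
    intro i
    rw [Real.volume_Ico]
    congr 1
    ring
  simp [this]

lemma volume_set_ne_zero (Q : DyadicCube d) : volume Q.set ≠ 0 := by
  rw [volume_set]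
  refine (pow_ne_zero _ ?_)
  simp only [ne_eq, ENNReal.ofReal_eq_zero, not_le]
  positivity

lemma volume_set_ne_top (Q : DyadicCube d) : volume Q.set ≠ ∞ := by
  rw [volume_set]
  exact (pow_ne_top ofReal_ne_top)

/-- Two dyadic cubes that intersect are nested. -/
lemma subset_or_subset {Q Q' : DyadicCube d} (h : (Q.set ∩ Q'.set).Nonempty) :
    Q.set ⊆ Q'.set ∨ Q'.set ⊆ Q.set := by
  -- wlog on generations
  have key : ∀ (A B : DyadicCube d), A.k ≤ B.k → ((A.set ∩ B.set).Nonempty) → A.set ⊆ B.set := by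
    intro A B hk ⟨x, hxA, hxB⟩
    intro y hy i
    have hA := hxA i
    have hB := hxB i
    have hyi := hy i
    set a : ℝ := (2:ℝ) ^ A.k with ha
    have hapos : (0:ℝ) < a := by positivity
    -- N = 2 ^ (B.k - A.k)
    set e : ℕ := (B.k - A.k).toNat with he
    have hBk : (2:ℝ) ^ B.k = a * (2^e : ℤ) := by
      have h1 : (2:ℝ) ^ B.k = (2:ℝ) ^ A.k * (2:ℝ) ^ (e : ℤ) := by
        rw [← zpow_add₀ (by norm_num : (2:ℝ) ≠ 0)]
        congr 1
        omega
      rw [h1, ha, zpow_natCast]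
      push_cast
      ring
    set N : ℤ := 2 ^ e with hN
    -- from x: N * B.m i ≤ A.m i and A.m i + 1 ≤ N * (B.m i + 1)
    have h1 : (N : ℝ) * B.m i < A.m i + 1 := by
      have : a * ((N:ℝ) * B.m i) < a * (A.m i + 1) := by
        calc a * ((N:ℝ) * B.m i) = (2:ℝ) ^ B.k * B.m i := by rw [hBk]; push_cast; ring
        _ ≤ x i := hB.1
        _ < a * (A.m i + 1) := hA.2
      exact lt_of_mul_lt_mul_left this hapos.le
    have h2 : (A.m i : ℝ) < N * (B.m i + 1) := by
      have : a * (A.m i : ℝ) < a * ((N:ℝ) * (B.m i + 1)) := by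
        calc a * (A.m i : ℝ) ≤ x i := hA.1
        _ < (2:ℝ) ^ B.k * (B.m i + 1) := hB.2
        _ = a * ((N:ℝ) * (B.m i + 1)) := by rw [hBk]; push_cast; ring
      exact lt_of_mul_lt_mul_left this hapos.le
    have h1' : N * B.m i ≤ A.m i := by
      have : N * B.m i < A.m i + 1 := by exact_mod_cast h1
      omega
    have h2' : A.m i + 1 ≤ N * (B.m i + 1) := by
      have : A.m i < N * (B.m i + 1) := by exact_mod_cast h2
      omega
    constructor
    · calc (2:ℝ) ^ B.k * B.m i = a * ((N:ℝ) * B.m i) := by rw [hBk]; push_cast; ring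
      _ ≤ a * (A.m i) := by
          have : ((N * B.m i : ℤ) : ℝ) ≤ ((A.m i : ℤ) : ℝ) := by exact_mod_cast h1'
          push_cast at this
          nlinarith
      _ ≤ y i := hyi.1
    · calc y i < a * (A.m i + 1) := hyi.2
      _ ≤ a * ((N:ℝ) * (B.m i + 1)) := by
          have : ((A.m i + 1 : ℤ) : ℝ) ≤ ((N * (B.m i + 1) : ℤ) : ℝ) := by exact_mod_cast h2'
          push_cast at this
          nlinarith
      _ = (2:ℝ) ^ B.k * (B.m i + 1) := by rw [hBk]; push_cast; ring
  rcases le_total Q.k Q'.k with hk | hk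
  · exact Or.inl (key Q Q' hk h)
  · exact Or.inr (key Q' Q hk (by rwa [Set.inter_comm] at h))

end DyadicCube

/-- Selection of maximal sets: from a finite nested-or-disjoint family, select a pairwise
disjoint subfamily with the same union. -/
lemma exists_disjoint_subfamily {α : Type*} (𝒜 : Finset (Set α))
    (hnest : ∀ A ∈ 𝒜, ∀ B ∈ 𝒜, (A ∩ B).Nonempty → A ⊆ B ∨ B ⊆ A) :
    ∃ 𝒜' ⊆ 𝒜, (∀ A ∈ 𝒜, ∃ B ∈ 𝒜', A ⊆ B) ∧
      (𝒜' : Set (Set α)).Pairwise Disjoint := by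
  classical
  refine ⟨𝒜.filter (fun A => ∀ B ∈ 𝒜, A ⊆ B → A = B), Finset.filter_subset _ _, ?_, ?_⟩
  · intro A hA
    obtain ⟨B, hB, hBmax⟩ := Finset.exists_maximal (s := 𝒜.filter (fun B => A ⊆ B))
      ⟨A, Finset.mem_filter.2 ⟨hA, subset_rfl⟩⟩
    simp only [Finset.mem_filter] at hB
    refine ⟨B, Finset.mem_filter.2 ⟨hB.1, fun C hC hBC => ?_⟩, hB.2⟩
    by_contra hne
    exact hne (le_antisymm hBC (hBmax (Finset.mem_filter.2 ⟨hC, hB.2.trans hBC⟩) hBC))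
  · intro A hA B hB hAB
    rw [Finset.mem_coe, Finset.mem_filter] at hA hB
    by_contra hdisj
    obtain hne := Set.not_disjoint_iff_nonempty_inter.1 hdisj
    rcases hnest A hA.1 B hB.1 hne with h | h
    · exact hAB (hA.2 B hB.1 h)
    · exact hAB ((hB.2 A hA.1 h).symm)

noncomputable section ScalarMaximal
variable {d : ℕ}

/-- ENNReal-valued average of `h` over the cube `Q`. -/
def avgL (h : (Fin d → ℝ) → ℝ≥0∞) (Q : DyadicCube d) : ℝ≥0∞ :=
  (∫⁻ y in Q.set, h y) / volume Q.set

/-- Scalar (ENNReal-valued) dyadic maximal operator over a finite collection. -/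
def MM (F : Finset (DyadicCube d)) (h : (Fin d → ℝ) → ℝ≥0∞) (x : Fin d → ℝ) : ℝ≥0∞ :=
  F.sup fun Q => Q.set.indicator (fun _ => avgL h Q) x

lemma measurable_MM (F : Finset (DyadicCube d)) (h : (Fin d → ℝ) → ℝ≥0∞) :
    Measurable (MM F h) := by
  classical
  induction F using Finset.induction_on with
  | empty =>
    have : MM (∅ : Finset (DyadicCube d)) h = fun _ => 0 := by funext x; simp [MM]
    rw [this]; exact measurable_const
  | insert Q F hx ih =>
    have : MM (insert Q F) h =
        fun x => (Q.set.indicator (fun _ => avgL h Q) x) ⊔ MM F h x := by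
      funext x; simp [MM, Finset.sup_insert]
    rw [this]
    exact Measurable.sup (measurable_const.indicator Q.measurableSet_set) ih

lemma avgL_congr_ae {h g : (Fin d → ℝ) → ℝ≥0∞} (hfg : h =ᵐ[volume] g) (Q : DyadicCube d) :
    avgL h Q = avgL g Q := by
  unfold avgL
  rw [lintegral_congr_ae (ae_restrict_of_ae hfg)]

/-- Weak (1,1) bound for the scalar dyadic maximal operator. -/
lemma MM_weak (F : Finset (DyadicCube d)) (h : (Fin d → ℝ) → ℝ≥0∞) {lam : ℝ≥0∞}
    (h0 : lam ≠ 0) (htop : lam ≠ ∞) :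
    lam * volume {x | lam < MM F h x} ≤ ∫⁻ y, h y := by
  classical
  set 𝒜 : Finset (Set (Fin d → ℝ)) :=
    (F.filter (fun Q => lam < avgL h Q)).image DyadicCube.set with h𝒜
  -- membership facts
  have hmem : ∀ A ∈ 𝒜, ∃ Q ∈ F, lam < avgL h Q ∧ A = Q.set := by
    intro A hA
    rw [h𝒜, Finset.mem_image] at hA
    obtain ⟨Q, hQ, rfl⟩ := hA
    rw [Finset.mem_filter] at hQ
    exact ⟨Q, hQ.1, hQ.2, rfl⟩
  obtain ⟨𝒜', h𝒜'sub, hcover, hdisj⟩ := exists_disjoint_subfamily 𝒜 (by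
    intro A hA B hB hne
    obtain ⟨Q, _, _, rfl⟩ := hmem A hA
    obtain ⟨Q', _, _, rfl⟩ := hmem B hB
    exact DyadicCube.subset_or_subset hne)
  -- the superlevel set is covered by ⋃ 𝒜'
  have hsub : {x | lam < MM F h x} ⊆ ⋃ A ∈ 𝒜', A := by
    intro x hx
    rw [Set.mem_setOf_eq, MM, Finset.lt_sup_iff] at hx
    obtain ⟨Q, hQF, hQx⟩ := hx
    have hxQ : x ∈ Q.set := by
      by_contra hxQ
      rw [Set.indicator_of_notMem hxQ] at hQx
      exact (not_lt_of_ge zero_le) hQx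
    rw [Set.indicator_of_mem hxQ] at hQx
    have hQ𝒜 : Q.set ∈ 𝒜 := Finset.mem_image_of_mem _ (Finset.mem_filter.2 ⟨hQF, hQx⟩)
    obtain ⟨B, hB, hQB⟩ := hcover Q.set hQ𝒜
    exact Set.mem_biUnion hB (hQB hxQ)
  calc lam * volume {x | lam < MM F h x} ≤ lam * volume (⋃ A ∈ 𝒜', A) :=
        mul_le_mul_right (measure_mono hsub) lam
    _ ≤ lam * ∑ A ∈ 𝒜', volume A := mul_le_mul_right (measure_biUnion_finset_le _ _) lam
    _ = ∑ A ∈ 𝒜', lam * volume A := Finset.mul_sum _ _ _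
    _ ≤ ∑ A ∈ 𝒜', ∫⁻ y in A, h y := by
        refine Finset.sum_le_sum fun A hA => ?_
        obtain ⟨Q, _, hQavg, rfl⟩ := hmem A (h𝒜'sub hA)
        rw [mul_comm lam]
        exact mul_comm (volume Q.set) lam ▸ (ENNReal.le_div_iff_mul_le (Or.inl Q.volume_set_ne_zero)
          (Or.inl Q.volume_set_ne_top)).1 hQavg.le
    _ = ∫⁻ y in ⋃ A ∈ 𝒜', A, h y := by
        refine (lintegral_biUnion_finset ?_ ?_ _).symm
        · exact hdisj
        · intro A hA
          obtain ⟨Q, _, _, rfl⟩ := hmem A (h𝒜'sub hA)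
          exact Q.measurableSet_set
    _ ≤ ∫⁻ y, h y := setLIntegral_le_lintegral _ _

end ScalarMaximal

noncomputable section ScalarMaximal2
variable {d : ℕ}

attribute [local instance] Classical.propDecidable

lemma ofReal_toReal_rpow {a : ℝ≥0∞} (ha : a ≠ ∞) {p : ℝ} (hp : 0 ≤ p) :
    ENNReal.ofReal (a.toReal ^ p) = a ^ p := by
  rw [ENNReal.toReal_rpow, ENNReal.ofReal_toReal (ENNReal.rpow_ne_top_of_nonneg hp ha)]

lemma ennreal_rpow_split (a : ℝ≥0∞) {u v : ℝ} (hu : 0 ≤ u) (hv : 0 ≤ v) :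
    a ^ (u + v) = a ^ u * a ^ v := ENNReal.rpow_add_of_nonneg u v hu hv

/-- Sublinearity-type inequality for the maximal operator. -/
lemma MM_le_add (F : Finset (DyadicCube d)) (h h₁ : (Fin d → ℝ) → ℝ≥0∞)
    (t : ℝ≥0∞) (hpt : ∀ y, h y ≤ h₁ y + t) (x : Fin d → ℝ) :
    MM F h x ≤ MM F h₁ x + t := by
  refine Finset.sup_le fun Q hQ => ?_
  by_cases hx : x ∈ Q.set
  · rw [Set.indicator_of_mem hx]
    have havg : avgL h Q ≤ avgL h₁ Q + t := by
      have : (∫⁻ y in Q.set, h y) ≤ (∫⁻ y in Q.set, h₁ y) + t * volume Q.set := by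
        calc (∫⁻ y in Q.set, h y) ≤ ∫⁻ y in Q.set, (h₁ y + t) :=
              lintegral_mono hpt
        _ = (∫⁻ y in Q.set, h₁ y) + t * volume Q.set := by
            rw [lintegral_add_right _ measurable_const, setLIntegral_const]
      calc avgL h Q ≤ ((∫⁻ y in Q.set, h₁ y) + t * volume Q.set) / volume Q.set :=
            ENNReal.div_le_div_right this _
      _ = avgL h₁ Q + t * volume Q.set / volume Q.set := ENNReal.add_div
      _ = avgL h₁ Q + t := by
          rw [mul_div_assoc, ENNReal.div_self Q.volume_set_ne_zero Q.volume_set_ne_top,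
            mul_one]
    refine havg.trans (add_le_add_left ?_ t)
    calc avgL h₁ Q = Q.set.indicator (fun _ => avgL h₁ Q) x :=
          (Set.indicator_of_mem hx (fun _ => avgL h₁ Q)).symm
    _ ≤ MM F h₁ x := by
          unfold MM
          exact Finset.le_sup (f := fun Q : DyadicCube d =>
            Q.set.indicator (fun _ => avgL h₁ Q) x) hQ
  · rw [Set.indicator_of_notMem hx]
    exact zero_le

lemma MM_ne_top (F : Finset (DyadicCube d)) (h : (Fin d → ℝ) → ℝ≥0∞)
    (hfin : ∀ Q ∈ F, avgL h Q ≠ ∞) (x : Fin d → ℝ) : MM F h x ≠ ∞ := by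
  refine (Finset.sup_lt_iff (by simp : (⊥ : ℝ≥0∞) < ∞)).2 (fun Q hQ => ?_) |>.ne
  exact lt_of_le_of_lt (Set.indicator_le_self' (fun _ _ => zero_le) x)
    (lt_top_iff_ne_top.2 (hfin Q hQ))

/-- The inner `t`-integral bound. -/
lemma inner_bound {p : ℝ} (hp : 1 < p) (c : ℝ≥0∞) (g : ℝ → ℝ≥0∞)
    (hg : ∀ t, g t = if ENNReal.ofReal t < c * 2 then c else 0) :
    (∫⁻ t in Ioi (0:ℝ), ENNReal.ofReal (2 * t ^ (p-2)) * g t) ≤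
      ENNReal.ofReal (2 ^ p / (p - 1)) * c ^ p := by
  simp only [funext hg]
  have hK : 0 < 2 ^ p / (p - 1) :=
    div_pos (Real.rpow_pos_of_pos two_pos p) (by linarith)
  by_cases hc : c = ∞
  · rw [hc, ENNReal.top_rpow_of_pos (by linarith : 0 < p), ENNReal.mul_top
      (by simp [ENNReal.ofReal_eq_zero, not_le, hK] : ENNReal.ofReal (2 ^ p / (p-1)) ≠ 0)]
    exact le_top
  -- c finite
  set b : ℝ := (c * 2).toReal with hb
  have hbnn : 0 ≤ b := ENNReal.toReal_nonneg
  have hc2 : c * 2 ≠ ∞ := ENNReal.mul_ne_top hc (by simp)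
  have step1 : (∫⁻ t in Ioi (0:ℝ), ENNReal.ofReal (2 * t ^ (p-2)) *
      (if ENNReal.ofReal t < c * 2 then c else 0)) =
      ∫⁻ t in Ioo (0:ℝ) b, ENNReal.ofReal (2 * t ^ (p-2)) * c := by
    have : ∀ t ∈ Ioi (0:ℝ), (ENNReal.ofReal (2 * t ^ (p-2)) *
        (if ENNReal.ofReal t < c * 2 then c else 0)) =
        (Iio b).indicator (fun t => ENNReal.ofReal (2 * t ^ (p-2)) * c) t := by
      intro t ht
      rw [ENNReal.ofReal_lt_iff_lt_toReal (le_of_lt ht) hc2, ← hb]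
      by_cases htb : t < b
      · rw [if_pos htb, Set.indicator_of_mem (by exact htb : t ∈ Iio b)]
      · rw [if_neg htb, Set.indicator_of_notMem (by simpa using htb), mul_zero]
    rw [setLIntegral_congr_fun measurableSet_Ioi this,
      lintegral_indicator measurableSet_Iio, Measure.restrict_restrict measurableSet_Iio,
      Set.Iio_inter_Ioi]
  rw [step1, lintegral_mul_const' c _ hc]
  have step2 : (∫⁻ t in Ioo (0:ℝ) b, ENNReal.ofReal (2 * t ^ (p-2))) =
      ENNReal.ofReal (2 * (b ^ (p-1) / (p-1))) := by
    have hint : IntegrableOn (fun t : ℝ => 2 * t ^ (p-2)) (Ioo 0 b) := by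
      have := (intervalIntegral.intervalIntegrable_rpow' (by linarith : (-1:ℝ) < p - 2)
        (a := 0) (b := b)).const_mul 2
      rw [intervalIntegrable_iff_integrableOn_Ioc_of_le hbnn] at this
      exact this.mono_set Set.Ioo_subset_Ioc_self
    rw [← MeasureTheory.ofReal_integral_eq_lintegral_ofReal hint ?nn]
    case nn =>
      filter_upwards [self_mem_ae_restrict measurableSet_Ioo] with t ht
      have : (0:ℝ) < t := ht.1
      positivity
    congr 1
    rw [← integral_Ioc_eq_integral_Ioo, ← intervalIntegral.integral_of_le hbnn]
    rw [intervalIntegral.integral_const_mul, integral_rpow (Or.inl (by linarith : (-1:ℝ) < p-2))]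
    rw [Real.zero_rpow (by linarith : p - 2 + 1 ≠ 0)]
    rw [(by ring : p - 2 + 1 = p - 1)]
    ring
  rw [step2]
  -- now compute the coefficient
  have hb2 : b = 2 * c.toReal := by rw [hb, ENNReal.toReal_mul]; simp [mul_comm]
  have hcoef : 2 * (b ^ (p-1) / (p-1)) = (2 ^ p / (p-1)) * c.toReal ^ (p-1) := by
    rw [hb2, Real.mul_rpow (by norm_num) ENNReal.toReal_nonneg]
    have h2p : (2:ℝ) ^ p = 2 * 2 ^ (p-1) := by
      calc (2:ℝ) ^ p = 2 ^ (1 + (p-1)) := by congr 1; ring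
      _ = 2 ^ (1:ℝ) * 2 ^ (p-1) := Real.rpow_add two_pos 1 (p-1)
      _ = 2 * 2 ^ (p-1) := by rw [Real.rpow_one]
    rw [h2p]
    ring
  rw [hcoef, ENNReal.ofReal_mul (le_of_lt hK), mul_assoc]
  refine mul_le_mul_right ?_ _
  rw [ofReal_toReal_rpow hc (by linarith : (0:ℝ) ≤ p - 1)]
  calc c ^ (p-1) * c = c ^ (p-1) * c ^ (1:ℝ) := by rw [ENNReal.rpow_one]
  _ = c ^ p := by rw [← ennreal_rpow_split c (by linarith) (by norm_num)]; norm_num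
  _ ≤ c ^ p := le_rfl

end ScalarMaximal2

/-- Strong (p,p) bound for the scalar dyadic maximal operator. -/
lemma MM_strong (F : Finset (DyadicCube d)) (h : (Fin d → ℝ) → ℝ≥0∞) (hm : Measurable h)
    {p : ℝ} (hp : 1 < p) (hfin : ∀ Q ∈ F, avgL h Q ≠ ∞) :
    ∫⁻ x, MM F h x ^ p ≤ ENNReal.ofReal (p * (2 ^ p / (p - 1))) * ∫⁻ x, h x ^ p := by
  classical
  have ppos : 0 < p := lt_trans one_pos hp
  have hMMtop : ∀ x, MM F h x ≠ ∞ := MM_ne_top F h hfin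
  set Mr : (Fin d → ℝ) → ℝ := fun x => (MM F h x).toReal with hMr
  have hMrm : AEMeasurable Mr volume := ((measurable_MM F h).ennreal_toReal).aemeasurable
  have lc := lintegral_rpow_eq_lintegral_meas_lt_mul volume
      (ae_of_all _ fun x => ENNReal.toReal_nonneg) hMrm ppos
  have hLHS : ∫⁻ x, MM F h x ^ p = ∫⁻ x, ENNReal.ofReal (Mr x ^ p) := by
    refine lintegral_congr fun x => ?_
    exact (ofReal_toReal_rpow (hMMtop x) ppos.le).symm
  set Φ : ℝ → (Fin d → ℝ) → ℝ≥0∞ := fun t y =>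
      ENNReal.ofReal (2 * t ^ (p-2)) * (if ENNReal.ofReal t < h y * 2 then h y else 0) with hΦ
  have key : ∀ t ∈ Ioi (0:ℝ),
      volume {a | t < Mr a} * ENNReal.ofReal (t ^ (p-1)) ≤ ∫⁻ y, Φ t y := by
    intro t ht
    rw [Set.mem_Ioi] at ht
    set lam := ENNReal.ofReal t with hlam
    have hlam0 : lam ≠ 0 := by simp [hlam, ENNReal.ofReal_eq_zero, not_le, ht]
    have hlamtop : lam ≠ ∞ := ofReal_ne_top
    have hlam20 : lam / 2 ≠ 0 := by
      simp [ENNReal.div_eq_zero_iff, hlam0]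
    have hlam2top : lam / 2 ≠ ∞ := (ENNReal.div_lt_top hlamtop (by norm_num)).ne
    have hset : {a | t < Mr a} = {a | lam < MM F h a} := by
      ext a
      simp only [Set.mem_setOf_eq, hMr]
      exact (ENNReal.ofReal_lt_iff_lt_toReal (le_of_lt ht) (hMMtop a)).symm
    set h₁ : (Fin d → ℝ) → ℝ≥0∞ := fun y => if lam / 2 < h y then h y else 0 with hh₁
    have hpt : ∀ y, h y ≤ h₁ y + lam / 2 := by
      intro y
      simp only [hh₁]
      split_ifs with hy
      · exact le_self_add
      · rw [zero_add]
        exact not_lt.1 hy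
    have hsub : {a | lam < MM F h a} ⊆ {a | lam / 2 < MM F h₁ a} := by
      intro a ha
      rw [Set.mem_setOf_eq] at ha ⊢
      by_contra hcon
      push_neg at hcon
      have hchain : MM F h a ≤ lam := by
        calc MM F h a ≤ MM F h₁ a + lam / 2 := MM_le_add F h h₁ (lam/2) hpt a
        _ ≤ lam / 2 + lam / 2 := add_le_add_left hcon _
        _ = lam := ENNReal.add_halves lam
      exact (not_lt_of_ge hchain) ha
    have hweak := MM_weak F h₁ hlam20 hlam2top
    have hcoef : (lam/2)⁻¹ * ENNReal.ofReal (t ^ (p-1)) = ENNReal.ofReal (2 * t ^ (p-2)) := by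
      have h2 : lam / 2 = ENNReal.ofReal (t / 2) := by
        rw [ENNReal.ofReal_div_of_pos (by norm_num : (0:ℝ) < 2), hlam]
        norm_num
      rw [h2, ← ENNReal.ofReal_inv_of_pos (by positivity : (0:ℝ) < t/2),
        ← ENNReal.ofReal_mul (by positivity)]
      congr 1
      have htp : t ^ (p-1) = t ^ (p-2) * t := by
        rw [← Real.rpow_add_one (ne_of_gt ht)]
        congr 1
        ring
      rw [htp]
      field_simp
    calc volume {a | t < Mr a} * ENNReal.ofReal (t ^ (p-1))
        = volume {a | lam < MM F h a} * ENNReal.ofReal (t ^ (p-1)) := by rw [hset]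
      _ ≤ volume {a | lam/2 < MM F h₁ a} * ENNReal.ofReal (t ^ (p-1)) :=
          mul_le_mul_left (measure_mono hsub) _
      _ ≤ ((∫⁻ y, h₁ y) / (lam/2)) * ENNReal.ofReal (t ^ (p-1)) := by
          refine mul_le_mul_left ?_ _
          refine (ENNReal.le_div_iff_mul_le (Or.inl hlam20) (Or.inl hlam2top)).2 ?_
          rw [mul_comm]
          exact hweak
      _ = (∫⁻ y, h₁ y) * ((lam/2)⁻¹ * ENNReal.ofReal (t ^ (p-1))) := by
          rw [div_eq_mul_inv, mul_assoc]
      _ = ENNReal.ofReal (2 * t ^ (p-2)) * ∫⁻ y, h₁ y := by rw [hcoef, mul_comm]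
      _ = ∫⁻ y, ENNReal.ofReal (2 * t ^ (p-2)) * h₁ y :=
          (lintegral_const_mul' _ _ ofReal_ne_top).symm
      _ = ∫⁻ y, Φ t y := by
          refine lintegral_congr fun y => ?_
          simp only [hΦ, hh₁]
          congr 1
          by_cases hy : lam / 2 < h y
      -- rewrite the condition lam/2 < h y ↔ lam < h y * 2
          · rw [if_pos hy, if_pos ((ENNReal.div_lt_iff (Or.inl (by norm_num : (2:ℝ≥0∞) ≠ 0))
              (Or.inl (by norm_num : (2:ℝ≥0∞) ≠ ∞))).1 hy)]
          · rw [if_neg hy, if_neg (fun hcon => hy ((ENNReal.div_lt_iff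
              (Or.inl (by norm_num : (2:ℝ≥0∞) ≠ 0))
              (Or.inl (by norm_num : (2:ℝ≥0∞) ≠ ∞))).2 hcon))]
  have hΦm : Measurable (Function.uncurry Φ) := by
    apply Measurable.mul
    · exact ENNReal.measurable_ofReal.comp
        (measurable_const.mul (measurable_fst.pow measurable_const))
    · exact Measurable.ite
        (measurableSet_lt (ENNReal.measurable_ofReal.comp measurable_fst)
          ((hm.comp measurable_snd).mul measurable_const))
        (hm.comp measurable_snd) measurable_const
  have hswap : (∫⁻ t in Ioi (0:ℝ), ∫⁻ y, Φ t y) = ∫⁻ y, ∫⁻ t in Ioi (0:ℝ), Φ t y :=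
    lintegral_lintegral_swap hΦm.aemeasurable
  have inner : ∀ y, (∫⁻ t in Ioi (0:ℝ), Φ t y) ≤ ENNReal.ofReal (2^p/(p-1)) * h y ^ p :=
    fun y => by simp only [hΦ]; exact inner_bound hp (h y) _ (fun t => by
      by_cases hc : ENNReal.ofReal t < h y * 2 <;> simp [hc])
  calc ∫⁻ x, MM F h x ^ p
      = ENNReal.ofReal p * ∫⁻ t in Ioi (0:ℝ),
          volume {a | t < Mr a} * ENNReal.ofReal (t ^ (p-1)) := by rw [hLHS, lc]
    _ ≤ ENNReal.ofReal p * ∫⁻ y, ENNReal.ofReal (2^p/(p-1)) * h y ^ p := by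
        refine mul_le_mul_right ?_ _
        calc (∫⁻ t in Ioi (0:ℝ), volume {a | t < Mr a} * ENNReal.ofReal (t ^ (p-1)))
            ≤ ∫⁻ t in Ioi (0:ℝ), ∫⁻ y, Φ t y := by
              refine lintegral_mono_ae ?_
              filter_upwards [self_mem_ae_restrict measurableSet_Ioi] with t ht
              exact key t ht
          _ = ∫⁻ y, ∫⁻ t in Ioi (0:ℝ), Φ t y := hswap
          _ ≤ ∫⁻ y, ENNReal.ofReal (2^p/(p-1)) * h y ^ p := lintegral_mono inner
    _ = ENNReal.ofReal (p * (2 ^ p / (p - 1))) * ∫⁻ x, h x ^ p := by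
        rw [lintegral_const_mul' _ _ ofReal_ne_top, ENNReal.ofReal_mul ppos.le, mul_assoc]

/-- The L^p bound for the (ℓ^1-type) sparse operator. -/
lemma sparse_bound {p : ℝ} (hp : 1 < p) (S : Finset (DyadicCube d))
    (hS : IsSparse volume S) (g : (Fin d → ℝ) → ℝ≥0∞) (hg : Measurable g)
    (hfin : ∀ Q ∈ S, avgL g Q ≠ ∞) :
    (∫⁻ x, (∑ Q ∈ S, Q.set.indicator (fun _ => avgL g Q) x) ^ p) ^ (1/p) ≤
      2 * (ENNReal.ofReal (p * (2 ^ p / (p - 1)))) ^ (1/p) *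
        (ENNReal.ofReal ((p/(p-1)) * (2 ^ (p/(p-1)) / ((p/(p-1)) - 1)))) ^ (1/(p/(p-1))) *
        (∫⁻ x, g x ^ p) ^ (1/p) := by
  classical
  have ppos : 0 < p := lt_trans one_pos hp
  set p' : ℝ := p / (p-1) with hp'def
  have hpq : p.HolderConjugate p' := Real.HolderConjugate.conjExponent hp
  have hp'1 : 1 < p' := hpq.symm.lt
  have hp'pos : 0 < p' := lt_trans one_pos hp'1
  set a : DyadicCube d → ℝ≥0∞ := fun Q => avgL g Q with ha
  set T : (Fin d → ℝ) → ℝ≥0∞ := fun x => ∑ Q ∈ S, Q.set.indicator (fun _ => a Q) x with hT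
  have hTm : Measurable T :=
    Finset.measurable_sum _ fun Q _ => measurable_const.indicator Q.measurableSet_set
  set B : ℝ≥0∞ := ∑ Q ∈ S, a Q with hB
  have hBtop : B ≠ ∞ := by
    rw [hB]
    exact (ENNReal.sum_lt_top.2 fun Q hQ => (hfin Q hQ).lt_top).ne
  have hTleB : ∀ x, T x ≤ B := by
    intro x
    exact Finset.sum_le_sum fun Q _ => Set.indicator_le_self' (fun _ _ => zero_le) x
  have hTtop : ∀ x, T x ≠ ∞ := fun x => ((hTleB x).trans_lt hBtop.lt_top).ne
  set T' : (Fin d → ℝ) → ℝ≥0∞ := fun x => T x ^ (p-1) with hT'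
  have hT'm : Measurable T' := hTm.pow measurable_const
  set U : Set (Fin d → ℝ) := ⋃ Q ∈ S, Q.set with hU
  have hUm : MeasurableSet U := by
    exact MeasurableSet.biUnion S.countable_toSet fun Q _ => Q.measurableSet_set
  have hUvol : volume U ≠ ∞ := by
    refine ((measure_biUnion_finset_le S _).trans_lt ?_).ne
    exact (ENNReal.sum_lt_top.2 fun Q _ => Q.volume_set_ne_top.lt_top)
  set I : ℝ≥0∞ := ∫⁻ x, T x ^ p with hI
  have hIfin : I ≠ ∞ := by
    have hbd : ∀ x, T x ^ p ≤ U.indicator (fun _ => B ^ p) x := by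
      intro x
      by_cases hx : x ∈ U
      · rw [Set.indicator_of_mem hx]
        exact ENNReal.rpow_le_rpow (hTleB x) ppos.le
      · rw [Set.indicator_of_notMem hx]
        have : T x = 0 := by
          rw [hT]
          refine Finset.sum_eq_zero fun Q hQ => ?_
          refine Set.indicator_of_notMem (fun hxQ => hx ?_) _
          exact Set.mem_biUnion hQ hxQ
        rw [this, ENNReal.zero_rpow_of_pos ppos]
    refine ((lintegral_mono hbd).trans_lt ?_).ne
    rw [lintegral_indicator hUm, setLIntegral_const]
    exact ENNReal.mul_lt_top (ENNReal.rpow_ne_top_of_nonneg ppos.le hBtop).lt_top hUvol.lt_top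
  -- trivial case
  by_cases hI0 : I = 0
  · rw [hI0, ENNReal.zero_rpow_of_pos (by positivity : (0:ℝ) < 1/p)]
    exact zero_le
  obtain ⟨ES, hES, hESdisj⟩ := hS
  set b : DyadicCube d → ℝ≥0∞ := fun Q => avgL T' Q with hb
  have hbfin : ∀ Q ∈ S, b Q ≠ ∞ := by
    intro Q _
    have hnum : (∫⁻ x in Q.set, T' x) ≤ B ^ (p-1) * volume Q.set := by
      calc (∫⁻ x in Q.set, T' x) ≤ ∫⁻ _ in Q.set, B ^ (p-1) :=
            lintegral_mono fun x => ENNReal.rpow_le_rpow (hTleB x) (by linarith)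
      _ = B ^ (p-1) * volume Q.set := setLIntegral_const _ _
    rw [hb]
    unfold avgL
    refine (ENNReal.div_le_div_right hnum _).trans_lt ?_ |>.ne
    rw [mul_div_assoc, ENNReal.div_self Q.volume_set_ne_zero Q.volume_set_ne_top, mul_one]
    exact (ENNReal.rpow_ne_top_of_nonneg (by linarith) hBtop).lt_top
  -- expansion
  have expand : I = ∑ Q ∈ S, a Q * ∫⁻ x in Q.set, T' x := by
    have hTT : ∀ x, T x ^ p = T x * T' x := by
      intro x
      rw [hT']
      calc T x ^ p = T x ^ (1 + (p-1)) := by congr 1; ring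
      _ = T x ^ (1:ℝ) * T x ^ (p-1) := ennreal_rpow_split _ (by norm_num) (by linarith)
      _ = T x * T x ^ (p-1) := by rw [ENNReal.rpow_one]
    calc I = ∫⁻ x, T x * T' x := lintegral_congr hTT
    _ = ∫⁻ x, ∑ Q ∈ S, Q.set.indicator (fun _ => a Q) x * T' x := by
        refine lintegral_congr fun x => ?_
        rw [hT, Finset.sum_mul]
    _ = ∑ Q ∈ S, ∫⁻ x, Q.set.indicator (fun _ => a Q) x * T' x :=
        lintegral_finset_sum _ fun Q _ =>
          (measurable_const.indicator Q.measurableSet_set).mul hT'm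
    _ = ∑ Q ∈ S, a Q * ∫⁻ x in Q.set, T' x := by
        refine Finset.sum_congr rfl fun Q hQ => ?_
        have : ∀ x, Q.set.indicator (fun _ => a Q) x * T' x
            = Q.set.indicator (fun z => a Q * T' z) x := by
          intro x
          by_cases hx : x ∈ Q.set
          · rw [Set.indicator_of_mem hx, Set.indicator_of_mem hx]
          · rw [Set.indicator_of_notMem hx, Set.indicator_of_notMem hx, zero_mul]
        rw [lintegral_congr this, lintegral_indicator Q.measurableSet_set,
          lintegral_const_mul' _ _ (hfin Q hQ)]
  -- per-cube bound using sparseness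
  have perQ : ∀ Q ∈ S, a Q * ∫⁻ x in Q.set, T' x ≤
      2 * ∫⁻ x in ES Q, MM S g x * MM S T' x := by
    intro Q hQ
    have hIQ : (∫⁻ x in Q.set, T' x) = b Q * volume Q.set := by
      rw [hb]
      unfold avgL
      rw [ENNReal.div_mul_cancel Q.volume_set_ne_zero Q.volume_set_ne_top]
    have hptw : ∀ x ∈ ES Q, a Q * b Q ≤ MM S g x * MM S T' x := by
      intro x hx
      have hxQ : x ∈ Q.set := (hES Q hQ).1 hx
      refine mul_le_mul' ?_ ?_
      · calc a Q = Q.set.indicator (fun _ => a Q) x :=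
              (Set.indicator_of_mem hxQ (fun _ => a Q)).symm
        _ ≤ MM S g x := by
            unfold MM
            exact Finset.le_sup (f := fun Q : DyadicCube d =>
              Q.set.indicator (fun _ => avgL g Q) x) hQ
      · calc b Q = Q.set.indicator (fun _ => b Q) x :=
              (Set.indicator_of_mem hxQ (fun _ => b Q)).symm
        _ ≤ MM S T' x := by
            unfold MM
            exact Finset.le_sup (f := fun Q : DyadicCube d =>
              Q.set.indicator (fun _ => avgL T' Q) x) hQ
    calc a Q * ∫⁻ x in Q.set, T' x = a Q * (b Q * volume Q.set) := by rw [hIQ]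
    _ ≤ a Q * (b Q * (2 * volume (ES Q))) := by
        exact mul_le_mul_right (mul_le_mul_right (hES Q hQ).2.2 _) _
    _ = 2 * ((a Q * b Q) * volume (ES Q)) := by ring
    _ = 2 * ∫⁻ _ in ES Q, a Q * b Q := by rw [setLIntegral_const]
    _ ≤ 2 * ∫⁻ x in ES Q, MM S g x * MM S T' x := by
        refine mul_le_mul_right ?_ _
        exact setLIntegral_mono ((measurable_MM S g).mul (measurable_MM S T')) hptw
  -- sum over the disjoint sets E_Q
  have sumE : ∑ Q ∈ S, (∫⁻ x in ES Q, MM S g x * MM S T' x) ≤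
      ∫⁻ x, MM S g x * MM S T' x := by
    rw [← lintegral_biUnion_finset hESdisj (fun Q hQ => (hES Q hQ).2.1)]
    exact setLIntegral_le_lintegral _ _
  -- Hölder
  have hold : (∫⁻ x, MM S g x * MM S T' x) ≤
      (∫⁻ x, MM S g x ^ p) ^ (1/p) * (∫⁻ x, MM S T' x ^ p') ^ (1/p') :=
    ENNReal.lintegral_mul_le_Lp_mul_Lq volume hpq (measurable_MM S g).aemeasurable
      (measurable_MM S T').aemeasurable
  -- maximal function bounds
  have s1 : (∫⁻ x, MM S g x ^ p) ≤
      ENNReal.ofReal (p * (2 ^ p / (p - 1))) * ∫⁻ x, g x ^ p := MM_strong S g hg hp hfin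
  have hT'fin : ∀ Q ∈ S, avgL T' Q ≠ ∞ := hbfin
  have s2 : (∫⁻ x, MM S T' x ^ p') ≤
      ENNReal.ofReal (p' * (2 ^ p' / (p' - 1))) * I := by
    have := MM_strong S T' hT'm hp'1 hT'fin
    have hTp : (∫⁻ x, T' x ^ p') = I := by
      refine lintegral_congr fun x => ?_
      rw [hT', ← ENNReal.rpow_mul, hpq.sub_one_mul_conj]
    rw [hTp] at this
    exact this
  -- put everything together
  set c1 : ℝ≥0∞ := ENNReal.ofReal (p * (2 ^ p / (p - 1))) with hc1
  set c2 : ℝ≥0∞ := ENNReal.ofReal (p' * (2 ^ p' / (p' - 1))) with hc2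
  set G : ℝ≥0∞ := ∫⁻ x, g x ^ p with hG
  have main : I ≤ (2 * c1 ^ (1/p) * c2 ^ (1/p') * G ^ (1/p)) * I ^ (1/p') := by
    calc I = ∑ Q ∈ S, a Q * ∫⁻ x in Q.set, T' x := expand
    _ ≤ ∑ Q ∈ S, 2 * ∫⁻ x in ES Q, MM S g x * MM S T' x := Finset.sum_le_sum perQ
    _ = 2 * ∑ Q ∈ S, ∫⁻ x in ES Q, MM S g x * MM S T' x := by rw [Finset.mul_sum]
    _ ≤ 2 * ∫⁻ x, MM S g x * MM S T' x := mul_le_mul_right sumE _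
    _ ≤ 2 * ((∫⁻ x, MM S g x ^ p) ^ (1/p) * (∫⁻ x, MM S T' x ^ p') ^ (1/p')) :=
        mul_le_mul_right hold _
    _ ≤ 2 * ((c1 * G) ^ (1/p) * (c2 * I) ^ (1/p')) := by
        refine mul_le_mul_right (mul_le_mul' ?_ ?_) _
        · exact ENNReal.rpow_le_rpow s1 (by positivity)
        · exact ENNReal.rpow_le_rpow s2 (by positivity)
    _ = (2 * c1 ^ (1/p) * c2 ^ (1/p') * G ^ (1/p)) * I ^ (1/p') := by
        rw [ENNReal.mul_rpow_of_nonneg _ _ (by positivity : (0:ℝ) ≤ 1/p),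
          ENNReal.mul_rpow_of_nonneg _ _ (by positivity : (0:ℝ) ≤ 1/p')]
        ring
  have hsum : 1/p + 1/p' = (1:ℝ) := by
    rw [one_div, one_div]
    exact hpq.inv_add_inv_eq_one
  have hsplit : I = I ^ (1/p) * I ^ (1/p') := by
    rw [← ennreal_rpow_split I (by positivity) (by positivity), hsum, ENNReal.rpow_one]
  have hIp'0 : I ^ (1/p') ≠ 0 := by
    simp only [ne_eq, ENNReal.rpow_eq_zero_iff, not_or]
    constructor
    · rintro ⟨h1, -⟩; exact hI0 h1
    · rintro ⟨h1, -⟩; exact hIfin h1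
  have hIp't : I ^ (1/p') ≠ ∞ := ENNReal.rpow_ne_top_of_nonneg (by positivity) hIfin
  have final : I ^ (1/p) ≤ 2 * c1 ^ (1/p) * c2 ^ (1/p') * G ^ (1/p) := by
    exact (ENNReal.mul_le_mul_iff_left hIp'0 hIp't).1 (le_trans (le_of_eq hsplit.symm) main)
  calc (∫⁻ x, (∑ Q ∈ S, Q.set.indicator (fun _ => avgL g Q) x) ^ p) ^ (1/p) = I ^ (1/p) := rfl
  _ ≤ 2 * c1 ^ (1/p) * c2 ^ (1/p') * G ^ (1/p) := final

/-- `ℓ^q ↪ ℓ^1` for nonnegative reals: `(∑ aᵢ^q)^{1/q} ≤ ∑ aᵢ`. -/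
lemma rpow_inv_sum_le {ι : Type*} (s : Finset ι) (f : ι → ℝ) (hf : ∀ i ∈ s, 0 ≤ f i)
    {q : ℝ} (hq : 1 ≤ q) :
    (∑ i ∈ s, f i ^ q) ^ (1/q) ≤ ∑ i ∈ s, f i := by
  have hq0 : 0 < q := lt_of_lt_of_le one_pos hq
  have hsum0 : 0 ≤ ∑ i ∈ s, f i := Finset.sum_nonneg hf
  have key : ∑ i ∈ s, f i ^ q ≤ (∑ i ∈ s, f i) ^ q := by
    by_cases hzero : ∑ i ∈ s, f i = 0
    · have hall : ∀ i ∈ s, f i = 0 :=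
        (Finset.sum_eq_zero_iff_of_nonneg hf).1 hzero
      rw [hzero, Real.zero_rpow hq0.ne']
      refine le_of_eq (Finset.sum_eq_zero fun i hi => ?_)
      rw [hall i hi, Real.zero_rpow hq0.ne']
    have hpos : 0 < ∑ i ∈ s, f i := lt_of_le_of_ne hsum0 (Ne.symm hzero)
    calc ∑ i ∈ s, f i ^ q ≤ ∑ i ∈ s, (∑ j ∈ s, f j) ^ (q-1) * f i := by
          refine Finset.sum_le_sum fun i hi => ?_
          by_cases hfi : f i = 0
          · rw [hfi, Real.zero_rpow hq0.ne', mul_zero]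
          have hfi' : 0 < f i := lt_of_le_of_ne (hf i hi) (Ne.symm hfi)
          calc f i ^ q = f i ^ (q-1) * f i := by
                rw [← Real.rpow_add_one hfi (q-1)]
                congr 1
                ring
          _ ≤ (∑ j ∈ s, f j) ^ (q-1) * f i := by
              refine mul_le_mul_of_nonneg_right ?_ (hf i hi)
              exact Real.rpow_le_rpow (hf i hi) (Finset.single_le_sum hf hi) (by linarith)
    _ = (∑ j ∈ s, f j) ^ (q-1) * ∑ i ∈ s, f i := by rw [← Finset.mul_sum]
    _ = (∑ i ∈ s, f i) ^ q := by
        rw [← Real.rpow_add_one hzero (q-1)]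
        congr 1
        ring
  calc (∑ i ∈ s, f i ^ q) ^ (1/q) ≤ ((∑ i ∈ s, f i) ^ q) ^ (1/q) :=
        Real.rpow_le_rpow (Finset.sum_nonneg fun i hi => Real.rpow_nonneg (hf i hi) q) key
          (by positivity)
  _ = ∑ i ∈ s, f i := by
      rw [← Real.rpow_mul hsum0, mul_one_div_cancel hq0.ne', Real.rpow_one]

/-- The `ofReal` of the Bochner average of a nonnegative function is at most the
ENNReal average. -/
lemma ofReal_avg_le {d : ℕ} (f : (Fin d → ℝ) → ℝ) (hnn : ∀ y, 0 ≤ f y)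
    (hfm : AEStronglyMeasurable f volume) (Q : DyadicCube d) :
    ENNReal.ofReal (avg volume Q.set f) ≤ avgL (fun y => ENNReal.ofReal (f y)) Q := by
  have hv0 : volume Q.set ≠ 0 := Q.volume_set_ne_zero
  have hvt : volume Q.set ≠ ∞ := Q.volume_set_ne_top
  have hvpos : 0 < (volume Q.set).toReal := ENNReal.toReal_pos hv0 hvt
  set L : ℝ≥0∞ := ∫⁻ y in Q.set, ENNReal.ofReal (f y) with hL
  have hint : (∫ y in Q.set, f y) = L.toReal := by
    rw [hL, integral_eq_lintegral_of_nonneg_ae (ae_of_all _ hnn) hfm.restrict]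
  rw [avg, smul_eq_mul, hint]
  by_cases hLtop : L = ∞
  · rw [hLtop]
    simp
  · have : ENNReal.ofReal ((volume Q.set).toReal⁻¹ * L.toReal) =
        (volume Q.set)⁻¹ * L := by
      rw [ENNReal.ofReal_mul (by positivity), ENNReal.ofReal_inv_of_pos hvpos,
        ENNReal.ofReal_toReal hvt, ENNReal.ofReal_toReal hLtop]
    rw [this]
    unfold avgL
    rw [div_eq_mul_inv, mul_comm]

/-- Section 2: sparse domination w.r.t. Lebesgue measure implies the
Hardy–Littlewood property.
If for some `q ∈ [1,∞)` the dyadic lattice maximal operator (w.r.t. Lebesgue measure) is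
pointwise dominated by sparse operators `A^{dx}_{q,S}`, then for every `p ∈ (1,∞)` the
dyadic lattice maximal operators are bounded on `L^p(dx;E)` uniformly in `D`. -/
theorem sparse_domination_implies_HLProperty
    {d : ℕ} (hd : 1 ≤ d)
    (E : Type*) [NormedAddCommGroup E] [Lattice E] [HasSolidNorm E] [IsOrderedAddMonoid E] [NormedSpace ℝ E] [CompleteSpace E]
    (q : ℝ) (hq : 1 ≤ q) (C : ℝ)
    (hdom : ∀ D : Finset (DyadicCube d), ∀ f : (Fin d → ℝ) → E,
      LocallyIntegrable f volume →
      ∃ S ⊆ D, IsSparse (volume : Measure (Fin d → ℝ)) S ∧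
        ∀ᵐ x ∂(volume : Measure (Fin d → ℝ)),
          ‖dyadicMaximal volume D f x‖ ≤ C * sparseOp volume q S (fun y => ‖f y‖) x) :
    ∀ p : ℝ, 1 < p → ∃ Cp : ℝ, ∀ (D : Finset (DyadicCube d)) (f : (Fin d → ℝ) → E),
      MemLp f (ENNReal.ofReal p) volume →
      eLpNorm (dyadicMaximal volume D f) (ENNReal.ofReal p) volume ≤
        ENNReal.ofReal Cp * eLpNorm f (ENNReal.ofReal p) volume := by
  intro p hp
  classical
  have ppos : 0 < p := lt_trans one_pos hp
  have hp1 : 0 < p - 1 := by linarith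
  set K : ℝ≥0∞ := 2 * (ENNReal.ofReal (p * (2 ^ p / (p - 1)))) ^ (1/p) *
      (ENNReal.ofReal ((p/(p-1)) * (2 ^ (p/(p-1)) / ((p/(p-1)) - 1)))) ^ (1/(p/(p-1))) with hK
  have hp'pos : 0 < p/(p-1) := div_pos ppos hp1
  have hKtop : K ≠ ∞ := by
    rw [hK]
    refine ENNReal.mul_ne_top (ENNReal.mul_ne_top (by norm_num) ?_) ?_
    · exact ENNReal.rpow_ne_top_of_nonneg (by positivity) ENNReal.ofReal_ne_top
    · exact ENNReal.rpow_ne_top_of_nonneg (le_of_lt (one_div_pos.2 hp'pos))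
        ENNReal.ofReal_ne_top
  set Cplus : ℝ := max C 0 with hCpdef
  have hCplus : 0 ≤ Cplus := le_max_right _ _
  refine ⟨(ENNReal.ofReal Cplus * K).toReal, ?_⟩
  intro D f hf
  set P : ℝ≥0∞ := ENNReal.ofReal p with hPdef
  have hP0 : P ≠ 0 := by simp [hPdef, ENNReal.ofReal_eq_zero, not_le, ppos]
  have hPtop : P ≠ ∞ := ENNReal.ofReal_ne_top
  have hPto : P.toReal = p := ENNReal.toReal_ofReal ppos.le
  have h1P : (1:ℝ≥0∞) ≤ P := by
    rw [hPdef]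
    exact ENNReal.one_le_ofReal.2 hp.le
  have hfloc : LocallyIntegrable f volume := hf.locallyIntegrable h1P
  obtain ⟨S, hSD, hSsp, hae⟩ := hdom D f hfloc
  have hfm := hf.aestronglyMeasurable
  set g : (Fin d → ℝ) → ℝ≥0∞ := fun y => ENNReal.ofReal ‖hfm.mk f y‖ with hgdef
  have hgm : Measurable g :=
    ENNReal.measurable_ofReal.comp hfm.stronglyMeasurable_mk.norm.measurable
  have hgae : (fun y => ENNReal.ofReal ‖f y‖) =ᵐ[volume] g := by
    filter_upwards [hfm.ae_eq_mk] with y hy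
    simp only [hgdef, hy]
  set T : (Fin d → ℝ) → ℝ≥0∞ :=
    fun x => ∑ Q ∈ S, Q.set.indicator (fun _ => avgL g Q) x with hTdef
  have havgfin : ∀ Q ∈ S, avgL g Q ≠ ∞ := by
    intro Q hQ
    haveI hQfin : IsFiniteMeasure (volume.restrict Q.set) :=
      ⟨by rw [Measure.restrict_apply_univ]; exact Q.volume_set_ne_top.lt_top⟩
    have hint : Integrable f (volume.restrict Q.set) := (hf.restrict Q.set).integrable h1P
    have hnum : (∫⁻ y in Q.set, g y) ≠ ∞ := by
      have heq : (∫⁻ y in Q.set, g y) = ∫⁻ y in Q.set, (‖f y‖₊ : ℝ≥0∞) := by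
        refine lintegral_congr_ae (ae_restrict_of_ae ?_)
        filter_upwards [hgae] with y hy
        rw [← hy, ofReal_norm, enorm_eq_nnnorm]
      rw [heq]
      exact hint.2.ne
    unfold avgL
    exact (ENNReal.div_lt_top hnum Q.volume_set_ne_zero).ne
  have hdom2 : ∀ᵐ x ∂(volume : Measure (Fin d → ℝ)),
      (‖dyadicMaximal volume D f x‖₊ : ℝ≥0∞) ≤ ENNReal.ofReal Cplus * T x := by
    filter_upwards [hae] with x hx
    have havg_nonneg : ∀ Q : DyadicCube d,
        0 ≤ avg volume Q.set fun y => |‖f y‖| := by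
      intro Q
      rw [avg, smul_eq_mul]
      exact mul_nonneg (inv_nonneg.2 ENNReal.toReal_nonneg)
        (integral_nonneg fun y => abs_nonneg _)
    have hs_nonneg : ∀ Q ∈ S, 0 ≤ Q.set.indicator
        (fun _ => avg volume Q.set fun y => |‖f y‖|) x := by
      intro Q _
      exact Set.indicator_nonneg (fun _ _ => havg_nonneg Q) x
    have hsp_le : sparseOp volume q S (fun y => ‖f y‖) x ≤
        ∑ Q ∈ S, Q.set.indicator (fun _ => avg volume Q.set fun y => |‖f y‖|) x := by
      unfold sparseOp
      have hterm : ∀ Q ∈ S, Q.set.indicator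
          (fun _ => avg volume Q.set (fun y => |‖f y‖|) ^ q) x =
          (Q.set.indicator (fun _ => avg volume Q.set fun y => |‖f y‖|) x) ^ q := by
        intro Q _
        by_cases hxQ : x ∈ Q.set
        · rw [Set.indicator_of_mem hxQ, Set.indicator_of_mem hxQ]
        · rw [Set.indicator_of_notMem hxQ, Set.indicator_of_notMem hxQ,
            Real.zero_rpow (by linarith : q ≠ 0)]
      rw [Finset.sum_congr rfl hterm]
      exact rpow_inv_sum_le S _ hs_nonneg hq
    have hsp_nonneg : 0 ≤ sparseOp volume q S (fun y => ‖f y‖) x := by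
      unfold sparseOp
      refine Real.rpow_nonneg (Finset.sum_nonneg fun Q _ => ?_) _
      exact Set.indicator_nonneg (fun _ _ => Real.rpow_nonneg (havg_nonneg Q) q) x
    have hreal : ‖dyadicMaximal volume D f x‖ ≤
        Cplus * ∑ Q ∈ S, Q.set.indicator
          (fun _ => avg volume Q.set fun y => |‖f y‖|) x := by
      refine le_trans hx ?_
      calc C * sparseOp volume q S (fun y => ‖f y‖) x
          ≤ Cplus * sparseOp volume q S (fun y => ‖f y‖) x :=
            mul_le_mul_of_nonneg_right (le_max_left _ _) hsp_nonneg
        _ ≤ Cplus * ∑ Q ∈ S, Q.set.indicator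
              (fun _ => avg volume Q.set fun y => |‖f y‖|) x :=
            mul_le_mul_of_nonneg_left hsp_le hCplus
    calc (‖dyadicMaximal volume D f x‖₊ : ℝ≥0∞)
        = ENNReal.ofReal ‖dyadicMaximal volume D f x‖ :=
          (ofReal_norm _).symm
      _ ≤ ENNReal.ofReal (Cplus * ∑ Q ∈ S, Q.set.indicator
            (fun _ => avg volume Q.set fun y => |‖f y‖|) x) :=
          ENNReal.ofReal_le_ofReal hreal
      _ = ENNReal.ofReal Cplus * ENNReal.ofReal (∑ Q ∈ S, Q.set.indicator
            (fun _ => avg volume Q.set fun y => |‖f y‖|) x) :=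
          ENNReal.ofReal_mul hCplus
      _ ≤ ENNReal.ofReal Cplus * T x := by
          refine mul_le_mul_right ?_ _
          rw [ENNReal.ofReal_sum_of_nonneg hs_nonneg, hTdef]
          refine Finset.sum_le_sum fun Q _ => ?_
          by_cases hxQ : x ∈ Q.set
          · rw [Set.indicator_of_mem hxQ, Set.indicator_of_mem hxQ]
            have h1 : (fun y : Fin d → ℝ => |‖f y‖|) = fun y => ‖f y‖ :=
              funext fun y => abs_norm _
            rw [h1]
            calc ENNReal.ofReal (avg volume Q.set fun y => ‖f y‖)
                ≤ avgL (fun y => ENNReal.ofReal ‖f y‖) Q :=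
                  ofReal_avg_le _ (fun y => norm_nonneg _) hfm.norm Q
              _ = avgL g Q := avgL_congr_ae hgae Q
          · rw [Set.indicator_of_notMem hxQ, Set.indicator_of_notMem hxQ]
            simp
  have hMf : eLpNorm (dyadicMaximal volume D f) P volume ≤
      ENNReal.ofReal Cplus * (∫⁻ x, T x ^ p) ^ (1/p) := by
    rw [eLpNorm_eq_lintegral_rpow_enorm_toReal hP0 hPtop, hPto]
    calc (∫⁻ x, (‖dyadicMaximal volume D f x‖₊ : ℝ≥0∞) ^ p) ^ (1/p)
        ≤ (∫⁻ x, (ENNReal.ofReal Cplus * T x) ^ p) ^ (1/p) := by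
          refine ENNReal.rpow_le_rpow (lintegral_mono_ae ?_) (by positivity)
          filter_upwards [hdom2] with x hx
          exact ENNReal.rpow_le_rpow hx ppos.le
      _ = ENNReal.ofReal Cplus * (∫⁻ x, T x ^ p) ^ (1/p) := by
          have hsplit : ∀ x, (ENNReal.ofReal Cplus * T x) ^ p
              = (ENNReal.ofReal Cplus) ^ p * T x ^ p := fun x =>
            ENNReal.mul_rpow_of_nonneg _ _ ppos.le
          rw [lintegral_congr hsplit, lintegral_const_mul' _ _
            (ENNReal.rpow_ne_top_of_nonneg ppos.le ENNReal.ofReal_ne_top),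
            ENNReal.mul_rpow_of_nonneg _ _ (by positivity : (0:ℝ) ≤ 1/p),
            ← ENNReal.rpow_mul, mul_one_div_cancel ppos.ne', ENNReal.rpow_one]
  have hTbound := sparse_bound hp S hSsp g hgm havgfin
  have hGf : (∫⁻ x, g x ^ p) ^ (1/p) = eLpNorm f P volume := by
    rw [eLpNorm_eq_lintegral_rpow_enorm_toReal hP0 hPtop, hPto]
    congr 1
    refine lintegral_congr_ae ?_
    filter_upwards [hgae] with y hy
    rw [← hy, ofReal_norm]
  calc eLpNorm (dyadicMaximal volume D f) P volume
      ≤ ENNReal.ofReal Cplus * (∫⁻ x, T x ^ p) ^ (1/p) := hMf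
    _ ≤ ENNReal.ofReal Cplus * (K * (∫⁻ x, g x ^ p) ^ (1/p)) := by
        refine mul_le_mul_right ?_ _
        rw [hK]
        exact hTbound
    _ = (ENNReal.ofReal Cplus * K) * eLpNorm f P volume := by
        rw [hGf, hK]
        ring
    _ = ENNReal.ofReal ((ENNReal.ofReal Cplus * K).toReal) * eLpNorm f P volume := by
        rw [ENNReal.ofReal_toReal (ENNReal.mul_ne_top ENNReal.ofReal_ne_top hKtop)]
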